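/- For n ≥ 2 and k ≥ 1, the number of non-equivalent distinguishing colorings of the path P_n with at most k colors is Φ_k(P_n) = (k^n - k^{⌈n/2⌉})/2. -/

import Mathlib

open Function

section Defs

universe u₁ u₂ u₃

variable {V : Type u₁} {W : Type u₂} {C : Type u₃}

/-- A coloring is distinguishing if only the identity automorphism preserves it. -/
def DistCol (G : SimpleGraph V) (c : V → C) : Prop :=
  ∀ φ : G ≃g G, (∀ x, c (φ x) = c x) → ∀ x, φ x = x

/-- The distinguishing number: the least number of colors admitting a distinguishing coloring. -/
noncomputable def Dnum (G : SimpleGraph V) : ℕ :=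
  sInf {k | ∃ c : V → Fin k, DistCol G c}

/-- The distinguishing threshold: the least `k` such that every `k`-coloring is distinguishing. -/
noncomputable def theta (G : SimpleGraph V) : ℕ :=
  sInf {k | ∀ c : V → Fin k, DistCol G c}

/-- The number of non-equivalent distinguishing colorings with at most `k` colors. -/
noncomputable def Phi (G : SimpleGraph V) (k : ℕ) : ℕ :=
  Nat.card (Quot fun c₁ c₂ : {c : V → Fin k // DistCol G c} =>
    ∃ φ : G ≃g G, ∀ x, c₁.1 x = c₂.1 (φ x))

/-- Rooted version of distinguishing: only automorphisms fixing `v` are considered. -/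
def DistColR (G : SimpleGraph V) (v : V) (c : V → C) : Prop :=
  ∀ φ : G ≃g G, φ v = v → (∀ x, c (φ x) = c x) → ∀ x, φ x = x

noncomputable def DnumR (G : SimpleGraph V) (v : V) : ℕ :=
  sInf {k | ∃ c : V → Fin k, DistColR G v c}

noncomputable def thetaR (G : SimpleGraph V) (v : V) : ℕ :=
  sInf {k | ∀ c : V → Fin k, DistColR G v c}

noncomputable def PhiR (G : SimpleGraph V) (v : V) (k : ℕ) : ℕ :=
  Nat.card (Quot fun c₁ c₂ : {c : V → Fin k // DistColR G v c} =>
    ∃ φ : G ≃g G, φ v = v ∧ ∀ x, c₁.1 x = c₂.1 (φ x))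

/-- A vertex `u` is steady if every automorphism of `G - u` extends to an
automorphism of `G` fixing `u`. -/
def Steady (G : SimpleGraph V) (u : V) : Prop :=
  ∀ ψ : G.induce {w : V | w ≠ u} ≃g G.induce {w : V | w ≠ u},
    ∃ φ : G ≃g G, φ u = u ∧ ∀ w : {w : V | w ≠ u}, φ ↑w = ↑(ψ w)

/-- The vertex-sum of the graphs `G i` (all containing the vertex `u`) at `u`:
`none` is the central vertex obtained by identifying the copies of `u`. -/
def VertexSum {t : ℕ} (G : Fin t → SimpleGraph V) (u : V) :
    SimpleGraph (Option (Fin t × {w : V // w ≠ u})) where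
  Adj x y :=
    (∃ i w, x = none ∧ y = some (i, w) ∧ (G i).Adj u w.1) ∨
    (∃ i w, y = none ∧ x = some (i, w) ∧ (G i).Adj u w.1) ∨
    (∃ i w z, x = some (i, w) ∧ y = some (i, z) ∧ (G i).Adj w.1 z.1)
  symm := by
    constructor
    rintro x y (⟨i, w, hx, hy, h⟩ | ⟨i, w, hy, hx, h⟩ | ⟨i, w, z, hx, hy, h⟩)
    · exact Or.inr (Or.inl ⟨i, w, hx, hy, h⟩)
    · exact Or.inl ⟨i, w, hy, hx, h⟩
    · exact Or.inr (Or.inr ⟨i, z, w, hy, hx, h.symm⟩)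
  loopless := by
    constructor
    rintro x (⟨i, w, hx, hy, h⟩ | ⟨i, w, hy, hx, h⟩ | ⟨i, w, z, hx, hy, h⟩)
    · rw [hx] at hy; cases hy
    · rw [hy] at hx; cases hx
    · rw [hx] at hy
      obtain rfl : w = z := by simpa using hy
      exact h.ne rfl

/-- Disjoint union of the graphs `H i`. -/
def SigmaUnion {t : ℕ} (H : Fin t → SimpleGraph W) : SimpleGraph (Fin t × W) where
  Adj x y := x.1 = y.1 ∧ (H x.1).Adj x.2 y.2
  symm := by
    constructor
    rintro ⟨i, a⟩ ⟨j, b⟩ ⟨rfl, h⟩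
    exact ⟨rfl, h.symm⟩
  loopless := by constructor; rintro x ⟨-, h⟩; exact h.ne rfl

/-- A graph is 2-connected if it has at least 3 vertices and no cut vertex. -/
def TwoConnected (G : SimpleGraph V) [Fintype V] : Prop :=
  3 ≤ Fintype.card V ∧ ∀ x : V, (G.induce {w : V | w ≠ x}).Connected

/-- The smooth rooted product `G_s(H)` where `H` is rooted at `v`. -/
def RootedProd (G : SimpleGraph V) (H : SimpleGraph W) (v : W) :
    SimpleGraph (V × W) where
  Adj x y := (x.1 = y.1 ∧ H.Adj x.2 y.2) ∨ (x.2 = v ∧ y.2 = v ∧ G.Adj x.1 y.1)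
  symm := by
    constructor
    rintro x y (⟨h1, h2⟩ | ⟨h1, h2, h3⟩)
    · exact Or.inl ⟨h1.symm, h2.symm⟩
    · exact Or.inr ⟨h2, h1, h3.symm⟩
  loopless := by constructor; rintro x (⟨-, h⟩ | ⟨-, -, h⟩) <;> exact h.ne rfl

/-- The corona product `G ⊙ H`: the vertex `(g, none)` is the vertex `g` of `G`,
and `(g, some h)` is the vertex `h` in the copy of `H` attached to `g`. -/
def Corona (G : SimpleGraph V) (H : SimpleGraph W) :
    SimpleGraph (V × Option W) where
  Adj x y :=
    (x.2 = none ∧ y.2 = none ∧ G.Adj x.1 y.1) ∨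
    (x.1 = y.1 ∧ ∃ a b, x.2 = some a ∧ y.2 = some b ∧ H.Adj a b) ∨
    (x.1 = y.1 ∧ x.2 = none ∧ ∃ a, y.2 = some a) ∨
    (x.1 = y.1 ∧ y.2 = none ∧ ∃ a, x.2 = some a)
  symm := by
    constructor
    rintro x y (⟨h1, h2, h3⟩ | ⟨h1, a, b, h2, h3, h4⟩ | ⟨h1, h2, h3⟩ | ⟨h1, h2, h3⟩)
    · exact Or.inl ⟨h2, h1, h3.symm⟩
    · exact Or.inr (Or.inl ⟨h1.symm, b, a, h3, h2, h4.symm⟩)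
    · exact Or.inr (Or.inr (Or.inr ⟨h1.symm, h2, h3⟩))
    · exact Or.inr (Or.inr (Or.inl ⟨h1.symm, h2, h3⟩))
  loopless := by
    constructor
    rintro x (⟨-, -, h⟩ | ⟨-, a, b, h2, h3, h4⟩ | ⟨-, h2, a, h3⟩ | ⟨-, h2, a, h3⟩)
    · exact h.ne rfl
    · rw [h2] at h3; exact h4.ne (Option.some.inj h3)
    · rw [h2] at h3; cases h3
    · rw [h2] at h3; cases h3

/-- The lexicographic product `G ∘ H`. -/
def LexProd (G : SimpleGraph V) (H : SimpleGraph W) : SimpleGraph (V × W) where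
  Adj x y := G.Adj x.1 y.1 ∨ (x.1 = y.1 ∧ H.Adj x.2 y.2)
  symm := by
    constructor
    rintro x y (h | ⟨h1, h2⟩)
    exacts [Or.inl h.symm, Or.inr ⟨h1.symm, h2.symm⟩]
  loopless := by constructor; rintro x (h | ⟨-, h⟩) <;> exact h.ne rfl

/-- The number of cycles (orbits, counting fixed points) of a permutation. -/
noncomputable def numCycles (e : Equiv.Perm V) : ℕ :=
  Nat.card (Quot fun x y : V => ∃ n : ℤ, (e ^ n) x = y)

end Defs

open SimpleGraph

/-- reversal is a graph automorphism of the path -/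
def revIso (n : ℕ) : pathGraph n ≃g pathGraph n where
  toEquiv := Fin.revPerm
  map_rel_iff' := by
    intro a b
    have ha := a.isLt; have hb := b.isLt
    simp only [Fin.revPerm_apply, pathGraph_adj, Fin.val_rev]
    omega

lemma path_aut {n : ℕ} (φ : pathGraph n ≃g pathGraph n) :
    (∀ x, φ x = x) ∨ (∀ x, φ x = Fin.rev x) := by
  rcases Nat.lt_or_ge n 2 with hn | hn
  · left
    intro x
    have hx := x.isLt; have hfx := (φ x).isLt
    apply Fin.ext
    omega
  set f : ℕ → ℕ := fun i => if h : i < n then (φ ⟨i, h⟩).val else 0 with hf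
  have hlt : ∀ i (h : i < n), f i = (φ ⟨i, h⟩).val := by
    intro i h; simp [hf, h]
  have hbd : ∀ i, i < n → f i < n := by
    intro i h; rw [hlt i h]; exact (φ ⟨i, h⟩).isLt
  have hinj : ∀ i j, i < n → j < n → f i = f j → i = j := by
    intro i j hi hj hij
    rw [hlt i hi, hlt j hj] at hij
    have := φ.injective (Fin.ext hij)
    simpa using congrArg Fin.val this
  have hadj : ∀ i, i + 1 < n → f (i + 1) = f i + 1 ∨ f i = f (i + 1) + 1 := by
    intro i h
    have h' : i < n := by omega
    have a1 : (pathGraph n).Adj ⟨i, h'⟩ ⟨i + 1, h⟩ := pathGraph_adj.2 (Or.inl rfl)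
    have a2 := φ.map_rel_iff.2 a1
    rw [pathGraph_adj] at a2
    rw [hlt i h', hlt (i+1) h]
    omega
  rcases hadj 0 hn with h1 | h1
  · left
    have key : ∀ i, i + 1 < n → f i = f 0 + i ∧ f (i + 1) = f 0 + (i + 1) := by
      intro i
      induction i with
      | zero => intro h; exact ⟨rfl, by omega⟩
      | succ i ih =>
        intro h
        have h' : i + 1 < n := by omega
        obtain ⟨e1, e2⟩ := ih h'
        rw [show i + 1 + 1 = i + 2 from rfl] at h ⊢
        have h2 := hadj (i + 1) h
        rw [show i + 1 + 1 = i + 2 from rfl] at h2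
        rcases h2 with h2 | h2
        · exact ⟨e2, by omega⟩
        · exfalso
          have : f (i + 2) = f i := by omega
          have := hinj _ _ (by omega) (by omega) this
          omega
    have hall : ∀ i, i < n → f i = f 0 + i := by
      intro i hi
      match i with
      | 0 => rfl
      | j + 1 => exact (key j (by omega)).2
    have h0 : f 0 = 0 := by
      have := hall (n - 1) (by omega)
      have := hbd (n - 1) (by omega)
      omega
    intro x
    apply Fin.ext
    have := hall x.val x.isLt
    rw [hlt x.val x.isLt] at this
    simp only [Fin.eta] at this
    omega
  · right
    have key : ∀ i, i + 1 < n → f 0 = f i + i ∧ f 0 = f (i + 1) + (i + 1) := by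
      intro i
      induction i with
      | zero => intro h; exact ⟨rfl, by omega⟩
      | succ i ih =>
        intro h
        have h' : i + 1 < n := by omega
        obtain ⟨e1, e2⟩ := ih h'
        rw [show i + 1 + 1 = i + 2 from rfl] at h ⊢
        have h2 := hadj (i + 1) h
        rw [show i + 1 + 1 = i + 2 from rfl] at h2
        rcases h2 with h2 | h2
        · exfalso
          have : f (i + 2) = f i := by omega
          have := hinj _ _ (by omega) (by omega) this
          omega
        · exact ⟨e2, by omega⟩
    have hall : ∀ i, i < n → f 0 = f i + i := by
      intro i hi
      match i with
      | 0 => rfl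
      | j + 1 => exact (key j (by omega)).2
    have h0 : f 0 = n - 1 := by
      have := hall (n - 1) (by omega)
      have := hbd (n - 1) (by omega)
      have := hbd 0 (by omega)
      omega
    intro x
    apply Fin.ext
    have := hall x.val x.isLt
    rw [hlt x.val x.isLt] at this
    simp only [Fin.eta] at this
    rw [Fin.val_rev]
    omega

lemma distcol_iff {n k : ℕ} (hn : 2 ≤ n) (c : Fin n → Fin k) :
    DistCol (pathGraph n) c ↔ ¬ (c ∘ Fin.rev = c) := by
  constructor
  · intro hd hsym
    have := hd (revIso n) (fun x => congrFun hsym x) ⟨0, by omega⟩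
    have h2 := congrArg Fin.val this
    simp only [revIso, RelIso.coe_fn_mk, Fin.revPerm_apply, Fin.val_rev] at h2
    omega
  · intro hns φ hc x
    rcases path_aut φ with h | h
    · exact h x
    · exfalso
      apply hns
      funext y
      have := hc y
      rw [h y] at this
      exact this

/-- symmetric colorings are determined by the first ⌈n/2⌉ values -/
noncomputable def symEquiv (n k : ℕ) :
    {c : Fin n → Fin k // c ∘ Fin.rev = c} ≃ (Fin ((n + 1) / 2) → Fin k) where
  toFun c := fun j => c.1 ⟨j.val, by have := j.isLt; omega⟩
  invFun d := ⟨fun i => if h : i.val < (n + 1) / 2 then d ⟨i.val, h⟩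
      else d ⟨n - 1 - i.val, by have := i.isLt; omega⟩, by
    funext i
    have hi := i.isLt
    simp only [Function.comp_apply, Fin.val_rev]
    split_ifs with h1 h2 h3 <;>
      first
      | (exact congrArg d (by apply Fin.ext; simp only; omega))
      | omega⟩
  left_inv c := by
    apply Subtype.ext
    funext i
    have hi := i.isLt
    simp only
    split_ifs with h
    · rfl
    · have := congrFun c.2 i
      simp only [Function.comp_apply, Fin.val_rev] at this
      rw [← this]
      exact congrArg c.1 (by apply Fin.ext; simp only [Fin.val_rev]; omega)
  right_inv d := by
    funext j
    have hj := j.isLt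
    simp only [dif_pos hj]

/-- `Φ_k(P_n) = (k^n - k^⌈n/2⌉)/2` for `n ≥ 2`, `k ≥ 1`. -/
theorem stmt10 (n k : ℕ) (hn : 2 ≤ n) (hk : 1 ≤ k) :
    Phi (SimpleGraph.pathGraph n) k = (k ^ n - k ^ ((n + 1) / 2)) / 2 := by
  classical
  set G := SimpleGraph.pathGraph n with hG
  set m := (n + 1) / 2 with hm
  set S := {c : Fin n → Fin k // DistCol G c} with hS
  set R : S → S → Prop := fun c₁ c₂ => ∃ φ : G ≃g G, ∀ x, c₁.1 x = c₂.1 (φ x) with hRdef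
  have hequiv : Equivalence R := by
    constructor
    · exact fun c => ⟨(Iso.refl : G ≃g G), fun x => rfl⟩
    · rintro c₁ c₂ ⟨φ, h⟩
      refine ⟨φ.symm, fun x => ?_⟩
      rw [h (φ.symm x)]
      exact (congrArg c₂.1 (φ.apply_symm_apply x)).symm
    · rintro c₁ c₂ c₃ ⟨φ, h⟩ ⟨ψ, h'⟩
      exact ⟨φ.trans ψ, fun x => by rw [h x, h' (φ x)]; rfl⟩
  have hR : ∀ c₁ c₂ : S, R c₁ c₂ ↔ (c₁.1 = c₂.1 ∨ c₁.1 = c₂.1 ∘ Fin.rev) := by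
    intro c₁ c₂
    constructor
    · rintro ⟨φ, h⟩
      rcases path_aut φ with hid | hrev
      · left; funext x; rw [h x, hid x]
      · right; funext x; rw [Function.comp_apply, ← hrev x, ← h x]
    · rintro (h | h)
      · exact ⟨(Iso.refl : G ≃g G), fun x => by rw [h]; rfl⟩
      · exact ⟨revIso n, fun x => by rw [h]; rfl⟩
  have hrevne : ∀ c : S, c.1 ∘ Fin.rev ≠ c.1 := fun c => (distcol_iff hn c.1).1 c.2
  have hrevrev : ∀ c : Fin n → Fin k, (c ∘ Fin.rev) ∘ Fin.rev = c := by
    intro c; funext x; simp [Fin.rev_rev]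
  -- cardinality of S
  have hcardS : Nat.card S = k ^ n - k ^ m := by
    have e1 : S ≃ {c : Fin n → Fin k // ¬ (c ∘ Fin.rev = c)} :=
      Equiv.subtypeEquivRight (fun c => distcol_iff hn c)
    rw [Nat.card_congr e1, Nat.card_eq_fintype_card, Fintype.card_subtype_compl]
    have h2 : Fintype.card {c : Fin n → Fin k // c ∘ Fin.rev = c} = k ^ m := by
      rw [← Nat.card_eq_fintype_card, Nat.card_congr (symEquiv n k),
        Nat.card_eq_fintype_card]
      simp [hm]
    rw [h2]
    congr 1
    simp
  have hfinQ : Finite (Quot R) := Finite.of_surjective _ Quot.mk_surjective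
  have instQ : Fintype (Quot R) := Fintype.ofFinite _
  have hfib : ∀ q : Quot R, Nat.card {c : S // Quot.mk R c = q} = 2 := by
    refine Quot.ind (fun c₀ => ?_)
    have hdist : DistCol G (c₀.1 ∘ Fin.rev) := by
      rw [distcol_iff hn, hrevrev]
      exact fun h => hrevne c₀ h.symm
    have hb : Quot.mk R ⟨c₀.1 ∘ Fin.rev, hdist⟩ = Quot.mk R c₀ :=
      Quot.sound ((hR _ _).2 (Or.inr rfl))
    rw [Nat.card_eq_two_iff]
    refine ⟨⟨c₀, rfl⟩, ⟨⟨c₀.1 ∘ Fin.rev, hdist⟩, hb⟩, ?_, ?_⟩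
    · intro h
      have := congrArg (fun x => x.1.1) h
      exact hrevne c₀ this.symm
    · rw [Set.eq_univ_iff_forall]
      rintro ⟨c, hc⟩
      have hrc : R c c₀ := (hequiv.eqvGen_iff).1 (Quot.eq.1 hc)
      rcases (hR _ _).1 hrc with h | h
      · left; exact Subtype.ext (Subtype.ext h)
      · right; exact Subtype.ext (Subtype.ext h)
  have instS : Fintype S := Fintype.ofFinite _
  have hsum : Nat.card S = 2 * Nat.card (Quot R) := by
    rw [Nat.card_eq_fintype_card, Nat.card_eq_fintype_card,
      ← Fintype.card_congr (Equiv.sigmaFiberEquiv (Quot.mk R)), Fintype.card_sigma]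
    have : ∀ q : Quot R, Fintype.card {c : S // Quot.mk R c = q} = 2 := by
      intro q
      rw [← Nat.card_eq_fintype_card]
      exact hfib q
    simp only [this]
    rw [Finset.sum_const, Finset.card_univ, smul_eq_mul, Nat.mul_comm]
  have hPhi : Phi G k = Nat.card (Quot R) := rfl
  rw [hPhi]
  omega
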